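/- Let G be a finite group with subgroups G₁, G₂, G₃, G₄ that violate the Ingleton inequality, i.e., |G₁|·|G₂|·|G₃₄|·|G₁₂₃|·|G₁₂₄| < |G₁₂|·|G₁₃|·|G₁₄|·|G₂₃|·|G₂₄|. Then no three of the four subgroups are independent and the four subgroups are not independent; that is, for all distinct i, j, k ∈ {1,2,3,4} one has |G_i|·|G_j|·|G_k| ≠ |G|²·|G_i ∩ G_j ∩ G_k|, and |G₁|·|G₂|·|G₃|·|G₄| ≠ |G|³·|G₁ ∩ G₂ ∩ G₃ ∩ G₄|. -/

import Mathlib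

namespace IngletonAux

variable {G : Type*} [Group G] [Finite G]



lemma cpos (A : Subgroup G) : 0 < Nat.card A := Nat.card_pos

lemma le3 {A B C : Subgroup G} (hA : A ≤ C) (hB : B ≤ C) :
    Nat.card A * Nat.card B ≤ Nat.card C * Nat.card (A ⊓ B : Subgroup G) := by
  have e1 : Nat.card (B.subgroupOf A) = Nat.card (A ⊓ B : Subgroup G) := by
    rw [← Subgroup.inf_subgroupOf_left B A]
    exact (Nat.card_congr (Subgroup.subgroupOfEquivOfLe inf_le_left).toEquiv)
  have h1 : Nat.card (A ⊓ B : Subgroup G) * B.relIndex A = Nat.card A := by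
    rw [← e1]; exact Subgroup.card_mul_index (B.subgroupOf A)
  have e2 : Nat.card (B.subgroupOf C) = Nat.card B :=
    Nat.card_congr (Subgroup.subgroupOfEquivOfLe hB).toEquiv
  have h2 : B.relIndex C * Nat.card B = Nat.card C := by
    rw [Subgroup.relIndex, ← e2]; exact Subgroup.index_mul_card (B.subgroupOf C)
  have hnz : B.relIndex C ≠ 0 := by
    intro h; rw [h, zero_mul] at h2; exact (cpos C).ne h2
  have hle : B.relIndex A ≤ B.relIndex C := Subgroup.relIndex_le_of_le_right hA hnz
  calc Nat.card A * Nat.card B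
      = Nat.card (A ⊓ B : Subgroup G) * (B.relIndex A * Nat.card B) := by
        rw [← h1]; ring
    _ ≤ Nat.card (A ⊓ B : Subgroup G) * (B.relIndex C * Nat.card B) :=
        Nat.mul_le_mul_left _ (Nat.mul_le_mul_right _ hle)
    _ = Nat.card C * Nat.card (A ⊓ B : Subgroup G) := by rw [h2]; ring

lemma le2 (A B : Subgroup G) :
    Nat.card A * Nat.card B ≤ Nat.card G * Nat.card (A ⊓ B : Subgroup G) := by
  have := le3 (le_top : A ≤ ⊤) (le_top : B ≤ ⊤)
  rwa [Subgroup.card_top] at this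

lemma squeeze {A B C : Subgroup G}
    (h : Nat.card A * Nat.card B * Nat.card C
        = Nat.card G ^ 2 * Nat.card (A ⊓ B ⊓ C : Subgroup G)) :
    Nat.card A * Nat.card B = Nat.card G * Nat.card (A ⊓ B : Subgroup G) ∧
    Nat.card (A ⊓ B : Subgroup G) * Nat.card C
        = Nat.card G * Nat.card (A ⊓ B ⊓ C : Subgroup G) := by
  set n := Nat.card G with hn
  have npos : 0 < n := Nat.card_pos
  have l1 := le2 A B
  have l2 := le2 (A ⊓ B) C
  have key : n ^ 2 * Nat.card (A ⊓ B ⊓ C : Subgroup G)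
      ≤ n * (Nat.card (A ⊓ B : Subgroup G) * Nat.card C) := by
    calc n ^ 2 * Nat.card (A ⊓ B ⊓ C : Subgroup G)
        = Nat.card A * Nat.card B * Nat.card C := h.symm
      _ ≤ n * Nat.card (A ⊓ B : Subgroup G) * Nat.card C :=
          Nat.mul_le_mul_right _ l1
      _ = n * (Nat.card (A ⊓ B : Subgroup G) * Nat.card C) := by ring
  have e2 : Nat.card (A ⊓ B : Subgroup G) * Nat.card C
      = n * Nat.card (A ⊓ B ⊓ C : Subgroup G) := by
    refine le_antisymm l2 ?_
    have := key
    rw [pow_two, mul_assoc] at this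
    exact Nat.le_of_mul_le_mul_left this npos
  have e1 : Nat.card A * Nat.card B = n * Nat.card (A ⊓ B : Subgroup G) := by
    refine le_antisymm l1 ?_
    have h' : (n * Nat.card (A ⊓ B : Subgroup G)) * Nat.card C
        = (Nat.card A * Nat.card B) * Nat.card C := by
      rw [h, pow_two, mul_assoc, e2]; ring
    exact le_of_eq (Nat.eq_of_mul_eq_mul_right (cpos C) h')
  exact ⟨e1, e2⟩






lemma arith1 (n a0 a1 a2 a3 a01 a02 a03 a12 a13 a23 a012 a013 : ℕ)
    (hpos : 0 < a0 * a1)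
    (E1 : a0 * a1 = n * a01) (E2 : a01 * a2 = n * a012)
    (E4 : a02 * a1 = n * a012) (E6 : a12 * a0 = n * a012)
    (I1 : a03 * a13 ≤ a3 * a013) (I2 : a2 * a3 ≤ n * a23) :
    a01 * a02 * a03 * a12 * a13 ≤ a0 * a1 * a23 * a012 * a013 := by
  refine Nat.le_of_mul_le_mul_left ?_ hpos
  calc (a0 * a1) * (a01 * a02 * a03 * a12 * a13)
      = a01 * ((a02 * a1) * (a12 * a0)) * (a03 * a13) := by ring
    _ = a01 * ((n * a012) * (n * a012)) * (a03 * a13) := by rw [E4, E6]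
    _ ≤ a01 * ((n * a012) * (n * a012)) * (a3 * a013) := Nat.mul_le_mul_left _ I1
    _ = (n * a012) * a013 * (a01 * a01) * (a2 * a3) := by
        nth_rewrite 2 [E2.symm]; ring
    _ ≤ (n * a012) * a013 * (a01 * a01) * (n * a23) := Nat.mul_le_mul_left _ I2
    _ = a23 * a012 * a013 * ((n * a01) * (n * a01)) := by ring
    _ = a23 * a012 * a013 * ((a0 * a1) * (a0 * a1)) := by rw [E1]
    _ = (a0 * a1) * (a0 * a1 * a23 * a012 * a013) := by ring

lemma arith2 (n a0 a1 a2 a3 a01 a02 a03 a12 a13 a23 a012 a013 a123 : ℕ)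
    (hn23 : 0 < n * a23) (h01n : 0 < a01 * n)
    (Ea : a12 * a3 = n * a123) (Eb : a13 * a2 = n * a123)
    (Ec : a23 * a1 = n * a123) (Ed : a2 * a3 = n * a23)
    (Ia : a02 * a01 ≤ a0 * a012) (Ib : a03 * a01 ≤ a0 * a013)
    (Ic : a0 * a1 ≤ n * a01) :
    a01 * a02 * a03 * a12 * a13 ≤ a0 * a1 * a23 * a012 * a013 := by
  have step1 : a12 * a13 * (n * a23) = a1 * a123 * (n * a23) := by
    calc a12 * a13 * (n * a23) = a12 * a13 * (a2 * a3) := by rw [Ed]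
      _ = (a12 * a3) * (a13 * a2) := by ring
      _ = (n * a123) * (n * a123) := by rw [Ea, Eb]
      _ = (a23 * a1) * (n * a123) := by rw [Ec]
      _ = a1 * a123 * (n * a23) := by ring
  have step2 : a01 * a02 * a03 * a123 ≤ a0 * a23 * a012 * a013 := by
    refine Nat.le_of_mul_le_mul_left ?_ h01n
    calc (a01 * n) * (a01 * a02 * a03 * a123)
        = (a02 * a01) * (a03 * a01) * (n * a123) := by ring
      _ = (a02 * a01) * (a03 * a01) * (a23 * a1) := by rw [Ec]
      _ ≤ (a0 * a012) * (a03 * a01) * (a23 * a1) :=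
          Nat.mul_le_mul_right _ (Nat.mul_le_mul_right _ Ia)
      _ ≤ (a0 * a012) * (a0 * a013) * (a23 * a1) :=
          Nat.mul_le_mul_right _ (Nat.mul_le_mul_left _ Ib)
      _ = a012 * a013 * a23 * a0 * (a0 * a1) := by ring
      _ ≤ a012 * a013 * a23 * a0 * (n * a01) := Nat.mul_le_mul_left _ Ic
      _ = (a01 * n) * (a0 * a23 * a012 * a013) := by ring
  refine Nat.le_of_mul_le_mul_left ?_ hn23
  calc (n * a23) * (a01 * a02 * a03 * a12 * a13)
      = (a01 * a02 * a03) * (a12 * a13 * (n * a23)) := by ring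
    _ = (a01 * a02 * a03) * (a1 * a123 * (n * a23)) := by rw [step1]
    _ = (a1 * (n * a23)) * (a01 * a02 * a03 * a123) := by ring
    _ ≤ (a1 * (n * a23)) * (a0 * a23 * a012 * a013) := Nat.mul_le_mul_left _ step2
    _ = (n * a23) * (a0 * a1 * a23 * a012 * a013) := by ring




lemma swap12 {n2 : ℕ} {A B C : Subgroup G}
    (h : Nat.card A * Nat.card B * Nat.card C = n2 * Nat.card (A ⊓ B ⊓ C : Subgroup G)) :
    Nat.card B * Nat.card A * Nat.card C = n2 * Nat.card (B ⊓ A ⊓ C : Subgroup G) := by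
  rw [show B ⊓ A ⊓ C = A ⊓ B ⊓ C from by rw [inf_comm B A], ← h]; ring

lemma swap23 {n2 : ℕ} {A B C : Subgroup G}
    (h : Nat.card A * Nat.card B * Nat.card C = n2 * Nat.card (A ⊓ B ⊓ C : Subgroup G)) :
    Nat.card A * Nat.card C * Nat.card B = n2 * Nat.card (A ⊓ C ⊓ B : Subgroup G) := by
  rw [show A ⊓ C ⊓ B = A ⊓ B ⊓ C from (inf_right_comm A B C).symm, ← h]; ring

lemma Kab (A B C D : Subgroup G)
    (hv : Nat.card A * Nat.card B * Nat.card (C ⊓ D : Subgroup G) *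
        Nat.card (A ⊓ B ⊓ C : Subgroup G) * Nat.card (A ⊓ B ⊓ D : Subgroup G) <
      Nat.card (A ⊓ B : Subgroup G) * Nat.card (A ⊓ C : Subgroup G) *
        Nat.card (A ⊓ D : Subgroup G) * Nat.card (B ⊓ C : Subgroup G) *
        Nat.card (B ⊓ D : Subgroup G))
    (hind : Nat.card A * Nat.card B * Nat.card C
        = Nat.card G ^ 2 * Nat.card (A ⊓ B ⊓ C : Subgroup G)) : False := by
  obtain ⟨E1, E2⟩ := squeeze hind
  have E4 := (squeeze (IngletonAux.swap23 hind)).2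
  rw [show A ⊓ C ⊓ B = A ⊓ B ⊓ C from (inf_right_comm A B C).symm] at E4
  have E6 := (squeeze (IngletonAux.swap23 (IngletonAux.swap12 hind))).2
  have eBCA : B ⊓ C ⊓ A = A ⊓ B ⊓ C := by
    rw [inf_comm (B ⊓ C) A, ← inf_assoc]
  rw [eBCA] at E6
  have eI : (A ⊓ D) ⊓ (B ⊓ D) = A ⊓ B ⊓ D := by
    ext x; simp only [Subgroup.mem_inf]; tauto
  have I1 : Nat.card (A ⊓ D : Subgroup G) * Nat.card (B ⊓ D : Subgroup G) ≤
      Nat.card D * Nat.card (A ⊓ B ⊓ D : Subgroup G) := by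
    have := le3 (inf_le_right : A ⊓ D ≤ D) (inf_le_right : B ⊓ D ≤ D)
    rwa [eI] at this
  have I2 := le2 C D
  exact absurd (arith1 (Nat.card G) (Nat.card A) (Nat.card B) (Nat.card C) (Nat.card D)
    (Nat.card (A ⊓ B : Subgroup G)) (Nat.card (A ⊓ C : Subgroup G))
    (Nat.card (A ⊓ D : Subgroup G)) (Nat.card (B ⊓ C : Subgroup G))
    (Nat.card (B ⊓ D : Subgroup G)) (Nat.card (C ⊓ D : Subgroup G))
    (Nat.card (A ⊓ B ⊓ C : Subgroup G)) (Nat.card (A ⊓ B ⊓ D : Subgroup G))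
    (Nat.mul_pos (cpos A) (cpos B)) E1 E2 E4 E6 I1 I2) (not_le.mpr hv)

lemma Kcd (A B C D : Subgroup G)
    (hv : Nat.card A * Nat.card B * Nat.card (C ⊓ D : Subgroup G) *
        Nat.card (A ⊓ B ⊓ C : Subgroup G) * Nat.card (A ⊓ B ⊓ D : Subgroup G) <
      Nat.card (A ⊓ B : Subgroup G) * Nat.card (A ⊓ C : Subgroup G) *
        Nat.card (A ⊓ D : Subgroup G) * Nat.card (B ⊓ C : Subgroup G) *
        Nat.card (B ⊓ D : Subgroup G))
    (hind : Nat.card B * Nat.card C * Nat.card D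
        = Nat.card G ^ 2 * Nat.card (B ⊓ C ⊓ D : Subgroup G)) : False := by
  have Ea := (squeeze hind).2
  have Eb := (squeeze (IngletonAux.swap23 hind)).2
  rw [show B ⊓ D ⊓ C = B ⊓ C ⊓ D from (inf_right_comm B C D).symm] at Eb
  have Ec := (squeeze (IngletonAux.swap23 (IngletonAux.swap12 hind))).2
  have eCDB : C ⊓ D ⊓ B = B ⊓ C ⊓ D := by
    rw [inf_comm (C ⊓ D) B, ← inf_assoc]
  rw [eCDB] at Ec
  have Ed := (squeeze (IngletonAux.swap23 (IngletonAux.swap12 hind))).1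
  have eIa : (A ⊓ C) ⊓ (A ⊓ B) = A ⊓ B ⊓ C := by
    ext x; simp only [Subgroup.mem_inf]; tauto
  have Ia : Nat.card (A ⊓ C : Subgroup G) * Nat.card (A ⊓ B : Subgroup G) ≤
      Nat.card A * Nat.card (A ⊓ B ⊓ C : Subgroup G) := by
    have := le3 (inf_le_left : A ⊓ C ≤ A) (inf_le_left : A ⊓ B ≤ A)
    rwa [eIa] at this
  have eIb : (A ⊓ D) ⊓ (A ⊓ B) = A ⊓ B ⊓ D := by
    ext x; simp only [Subgroup.mem_inf]; tauto
  have Ib : Nat.card (A ⊓ D : Subgroup G) * Nat.card (A ⊓ B : Subgroup G) ≤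
      Nat.card A * Nat.card (A ⊓ B ⊓ D : Subgroup G) := by
    have := le3 (inf_le_left : A ⊓ D ≤ A) (inf_le_left : A ⊓ B ≤ A)
    rwa [eIb] at this
  have Ic := le2 A B
  exact absurd (arith2 (Nat.card G) (Nat.card A) (Nat.card B) (Nat.card C) (Nat.card D)
    (Nat.card (A ⊓ B : Subgroup G)) (Nat.card (A ⊓ C : Subgroup G))
    (Nat.card (A ⊓ D : Subgroup G)) (Nat.card (B ⊓ C : Subgroup G))
    (Nat.card (B ⊓ D : Subgroup G)) (Nat.card (C ⊓ D : Subgroup G))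
    (Nat.card (A ⊓ B ⊓ C : Subgroup G)) (Nat.card (A ⊓ B ⊓ D : Subgroup G))
    (Nat.card (B ⊓ C ⊓ D : Subgroup G))
    (Nat.mul_pos Nat.card_pos (cpos (C ⊓ D))) (Nat.mul_pos (cpos (A ⊓ B)) Nat.card_pos)
    Ea Eb Ec Ed Ia Ib Ic) (not_le.mpr hv)

end IngletonAux




/-- If four subgroups violate the Ingleton inequality, then no three of them are
independent, and the four of them are not independent. -/
theorem stmt13 (G : Type*) [Group G] [Finite G] (H : Fin 4 → Subgroup G)
    (hviol : Nat.card (H 0) * Nat.card (H 1) * Nat.card (H 2 ⊓ H 3 : Subgroup G) *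
        Nat.card (H 0 ⊓ H 1 ⊓ H 2 : Subgroup G) * Nat.card (H 0 ⊓ H 1 ⊓ H 3 : Subgroup G) <
      Nat.card (H 0 ⊓ H 1 : Subgroup G) * Nat.card (H 0 ⊓ H 2 : Subgroup G) *
        Nat.card (H 0 ⊓ H 3 : Subgroup G) * Nat.card (H 1 ⊓ H 2 : Subgroup G) *
        Nat.card (H 1 ⊓ H 3 : Subgroup G)) :
    (∀ i j k : Fin 4, i ≠ j → i ≠ k → j ≠ k →
      Nat.card (H i) * Nat.card (H j) * Nat.card (H k) ≠
        Nat.card G ^ 2 * Nat.card (H i ⊓ H j ⊓ H k : Subgroup G)) ∧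
    Nat.card (H 0) * Nat.card (H 1) * Nat.card (H 2) * Nat.card (H 3) ≠
      Nat.card G ^ 3 * Nat.card (H 0 ⊓ H 1 ⊓ H 2 ⊓ H 3 : Subgroup G) := by
  constructor
  · intro i j k hij hik hjk hEq
    have hv2 : Nat.card (H 0) * Nat.card (H 1) * Nat.card (H 3 ⊓ H 2 : Subgroup G) * Nat.card (H 0 ⊓ H 1 ⊓ H 3 : Subgroup G) * Nat.card (H 0 ⊓ H 1 ⊓ H 2 : Subgroup G) < Nat.card (H 0 ⊓ H 1 : Subgroup G) * Nat.card (H 0 ⊓ H 3 : Subgroup G) * Nat.card (H 0 ⊓ H 2 : Subgroup G) * Nat.card (H 1 ⊓ H 3 : Subgroup G) * Nat.card (H 1 ⊓ H 2 : Subgroup G) := by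
      rw [inf_comm (H 3) (H 2)]
      exact lt_of_lt_of_le (lt_of_le_of_lt (le_of_eq (by ring)) hviol) (le_of_eq (by ring))
    have hv3 : Nat.card (H 1) * Nat.card (H 0) * Nat.card (H 2 ⊓ H 3 : Subgroup G) * Nat.card (H 1 ⊓ H 0 ⊓ H 2 : Subgroup G) * Nat.card (H 1 ⊓ H 0 ⊓ H 3 : Subgroup G) < Nat.card (H 1 ⊓ H 0 : Subgroup G) * Nat.card (H 1 ⊓ H 2 : Subgroup G) * Nat.card (H 1 ⊓ H 3 : Subgroup G) * Nat.card (H 0 ⊓ H 2 : Subgroup G) * Nat.card (H 0 ⊓ H 3 : Subgroup G) := by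
      rw [inf_comm (H 1) (H 0)]
      exact lt_of_lt_of_le (lt_of_le_of_lt (le_of_eq (by ring)) hviol) (le_of_eq (by ring))
    fin_cases i <;> fin_cases j <;> fin_cases k <;>
        first
          | exact hij rfl
          | exact hik rfl
          | exact hjk rfl
          | exact IngletonAux.Kab (H 0) (H 1) (H 2) (H 3) hviol hEq
          | exact IngletonAux.Kab (H 0) (H 1) (H 3) (H 2) hv2 hEq
          | exact IngletonAux.Kab (H 0) (H 1) (H 2) (H 3) hviol (IngletonAux.swap23 hEq)
          | exact IngletonAux.Kcd (H 1) (H 0) (H 2) (H 3) hv3 hEq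
          | exact IngletonAux.Kab (H 0) (H 1) (H 3) (H 2) hv2 (IngletonAux.swap23 hEq)
          | exact IngletonAux.Kcd (H 1) (H 0) (H 2) (H 3) hv3 (IngletonAux.swap23 hEq)
          | exact IngletonAux.Kab (H 0) (H 1) (H 2) (H 3) hviol (IngletonAux.swap12 hEq)
          | exact IngletonAux.Kab (H 0) (H 1) (H 3) (H 2) hv2 (IngletonAux.swap12 hEq)
          | exact IngletonAux.Kab (H 0) (H 1) (H 2) (H 3) hviol (IngletonAux.swap12 (IngletonAux.swap23 hEq))
          | exact IngletonAux.Kcd (H 0) (H 1) (H 2) (H 3) hviol hEq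
          | exact IngletonAux.Kab (H 0) (H 1) (H 3) (H 2) hv2 (IngletonAux.swap12 (IngletonAux.swap23 hEq))
          | exact IngletonAux.Kcd (H 0) (H 1) (H 2) (H 3) hviol (IngletonAux.swap23 hEq)
          | exact IngletonAux.Kab (H 0) (H 1) (H 2) (H 3) hviol (IngletonAux.swap23 (IngletonAux.swap12 hEq))
          | exact IngletonAux.Kcd (H 1) (H 0) (H 2) (H 3) hv3 (IngletonAux.swap12 hEq)
          | exact IngletonAux.Kab (H 0) (H 1) (H 2) (H 3) hviol (IngletonAux.swap12 (IngletonAux.swap23 (IngletonAux.swap12 hEq)))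
          | exact IngletonAux.Kcd (H 0) (H 1) (H 2) (H 3) hviol (IngletonAux.swap12 hEq)
          | exact IngletonAux.Kcd (H 1) (H 0) (H 2) (H 3) hv3 (IngletonAux.swap12 (IngletonAux.swap23 hEq))
          | exact IngletonAux.Kcd (H 0) (H 1) (H 2) (H 3) hviol (IngletonAux.swap12 (IngletonAux.swap23 hEq))
          | exact IngletonAux.Kab (H 0) (H 1) (H 3) (H 2) hv2 (IngletonAux.swap23 (IngletonAux.swap12 hEq))
          | exact IngletonAux.Kcd (H 1) (H 0) (H 2) (H 3) hv3 (IngletonAux.swap23 (IngletonAux.swap12 hEq))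
          | exact IngletonAux.Kab (H 0) (H 1) (H 3) (H 2) hv2 (IngletonAux.swap12 (IngletonAux.swap23 (IngletonAux.swap12 hEq)))
          | exact IngletonAux.Kcd (H 0) (H 1) (H 2) (H 3) hviol (IngletonAux.swap23 (IngletonAux.swap12 hEq))
          | exact IngletonAux.Kcd (H 1) (H 0) (H 2) (H 3) hv3 (IngletonAux.swap12 (IngletonAux.swap23 (IngletonAux.swap12 hEq)))
          | exact IngletonAux.Kcd (H 0) (H 1) (H 2) (H 3) hviol (IngletonAux.swap12 (IngletonAux.swap23 (IngletonAux.swap12 hEq)))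
  · intro h
    have l1 := IngletonAux.le2 (H 0) (H 1)
    have l2 := IngletonAux.le2 (H 0 ⊓ H 1) (H 2)
    have l3 := IngletonAux.le2 (H 0 ⊓ H 1 ⊓ H 2) (H 3)
    have npos : 0 < Nat.card G := Nat.card_pos
    have chain : Nat.card G ^ 3 * Nat.card (H 0 ⊓ H 1 ⊓ H 2 ⊓ H 3 : Subgroup G) ≤
        Nat.card G ^ 2 * (Nat.card (H 0 ⊓ H 1 ⊓ H 2 : Subgroup G) * Nat.card (H 3)) := by
      calc Nat.card G ^ 3 * Nat.card (H 0 ⊓ H 1 ⊓ H 2 ⊓ H 3 : Subgroup G)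
          = Nat.card (H 0) * Nat.card (H 1) * Nat.card (H 2) * Nat.card (H 3) := h.symm
        _ ≤ Nat.card G * Nat.card (H 0 ⊓ H 1 : Subgroup G) * Nat.card (H 2) * Nat.card (H 3) :=
            Nat.mul_le_mul_right _ (Nat.mul_le_mul_right _ l1)
        _ = Nat.card G * (Nat.card (H 0 ⊓ H 1 : Subgroup G) * Nat.card (H 2)) * Nat.card (H 3) := by ring
        _ ≤ Nat.card G * (Nat.card G * Nat.card (H 0 ⊓ H 1 ⊓ H 2 : Subgroup G)) * Nat.card (H 3) :=
            Nat.mul_le_mul_right _ (Nat.mul_le_mul_left _ l2)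
        _ = Nat.card G ^ 2 * (Nat.card (H 0 ⊓ H 1 ⊓ H 2 : Subgroup G) * Nat.card (H 3)) := by ring
    have e3 : Nat.card (H 0 ⊓ H 1 ⊓ H 2 : Subgroup G) * Nat.card (H 3) = Nat.card G * Nat.card (H 0 ⊓ H 1 ⊓ H 2 ⊓ H 3 : Subgroup G) := by
      refine le_antisymm l3 ?_
      refine Nat.le_of_mul_le_mul_left ?_ (Nat.pow_pos (n := 2) npos)
      calc Nat.card G ^ 2 * (Nat.card G * Nat.card (H 0 ⊓ H 1 ⊓ H 2 ⊓ H 3 : Subgroup G))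
          = Nat.card G ^ 3 * Nat.card (H 0 ⊓ H 1 ⊓ H 2 ⊓ H 3 : Subgroup G) := by ring
        _ ≤ Nat.card G ^ 2 * (Nat.card (H 0 ⊓ H 1 ⊓ H 2 : Subgroup G) * Nat.card (H 3)) := chain
    have hind3 : Nat.card (H 0) * Nat.card (H 1) * Nat.card (H 2) = Nat.card G ^ 2 * Nat.card (H 0 ⊓ H 1 ⊓ H 2 : Subgroup G) := by
      refine Nat.eq_of_mul_eq_mul_right (IngletonAux.cpos (H 3)) ?_
      calc Nat.card (H 0) * Nat.card (H 1) * Nat.card (H 2) * Nat.card (H 3)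
          = Nat.card G ^ 3 * Nat.card (H 0 ⊓ H 1 ⊓ H 2 ⊓ H 3 : Subgroup G) := h
        _ = Nat.card G ^ 2 * (Nat.card (H 0 ⊓ H 1 ⊓ H 2 : Subgroup G) * Nat.card (H 3)) := by rw [e3]; ring
        _ = Nat.card G ^ 2 * Nat.card (H 0 ⊓ H 1 ⊓ H 2 : Subgroup G) * Nat.card (H 3) := by ring
    exact IngletonAux.Kab (H 0) (H 1) (H 2) (H 3) hviol hind3
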